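/- Consider the second-order linear ODE y'' − m²y + (2p+1)α(t)^{2p} y = 0 where α is the homoclinic orbit. There exists a solution γ defined for all t ∈ ℝ with |γ(t)| ≤ C e^{mt} and |γ'(t)| ≤ C e^{mt} for all t ≥ 0, and such that the Wronskian β γ' − γ β' (with β = α') is a nonzero constant. -/

import Mathlib

open Real

/-- The homoclinic orbit of the Klein-Gordon ODE. -/
noncomputable def alph (m : ℝ) (p : ℕ) (t : ℝ) : ℝ :=
  m ^ ((1 : ℝ) / p) * ((p : ℝ) + 1) ^ ((1 : ℝ) / (2 * p)) /
    (Real.cosh (p * m * t)) ^ ((1 : ℝ) / p)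

lemma alph_pos {m : ℝ} (hm : 0 < m) (p : ℕ) (t : ℝ) : 0 < alph m p t := by
  unfold alph
  have h1 : (0:ℝ) < m ^ ((1 : ℝ) / p) := rpow_pos_of_pos hm _
  have h2 : (0:ℝ) < ((p : ℝ) + 1) ^ ((1 : ℝ) / (2 * p)) := by
    apply rpow_pos_of_pos; positivity
  have h3 : (0:ℝ) < (Real.cosh (p * m * t)) ^ ((1 : ℝ) / p) :=
    rpow_pos_of_pos (Real.cosh_pos _) _
  positivity

lemma alph_pow {m : ℝ} (hm : 0 < m) {p : ℕ} (hp : 1 ≤ p) (t : ℝ) :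
    alph m p t ^ (2 * p) = m ^ 2 * ((p : ℝ) + 1) / Real.cosh (p * m * t) ^ 2 := by
  have hp0 : (p : ℝ) ≠ 0 := by
    have : 0 < p := hp
    positivity
  have hch : (0:ℝ) < Real.cosh (p * m * t) := Real.cosh_pos _
  unfold alph
  rw [div_pow, mul_pow, ← Real.rpow_natCast (m ^ ((1:ℝ)/p)) (2*p),
    ← Real.rpow_natCast (((p:ℝ) + 1) ^ ((1:ℝ)/(2*p))) (2*p),
    ← Real.rpow_natCast ((Real.cosh (p * m * t)) ^ ((1:ℝ)/p)) (2*p),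
    ← Real.rpow_mul hm.le, ← Real.rpow_mul (by positivity : (0:ℝ) ≤ (p:ℝ)+1), ← Real.rpow_mul hch.le]
  have e1 : (1:ℝ)/p * ((2*p : ℕ) : ℝ) = 2 := by push_cast; field_simp
  have e2 : (1:ℝ)/(2*p) * ((2*p : ℕ) : ℝ) = 1 := by push_cast; field_simp
  rw [e1, e2, Real.rpow_one, show (2:ℝ) = ((2:ℕ):ℝ) by norm_num, Real.rpow_natCast,
    Real.rpow_natCast]

lemma hasDerivAt_alph {m : ℝ} (hm : 0 < m) {p : ℕ} (hp : 1 ≤ p) (t : ℝ) :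
    HasDerivAt (alph m p) (-m * Real.sinh (p * m * t) * alph m p t / Real.cosh (p * m * t)) t := by
  have hp0 : (p : ℝ) ≠ 0 := by
    have : 0 < p := hp
    positivity
  have hch : (0:ℝ) < Real.cosh ((p:ℝ) * m * t) := Real.cosh_pos _
  have h1 : HasDerivAt (fun s : ℝ => (p : ℝ) * m * s) ((p:ℝ) * m) t := by
    simpa using (hasDerivAt_id t).const_mul ((p:ℝ) * m)
  have hcosh : HasDerivAt (fun s : ℝ => Real.cosh ((p:ℝ) * m * s))
      (Real.sinh ((p:ℝ) * m * t) * ((p:ℝ) * m)) t :=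
    (Real.hasDerivAt_cosh _).comp t h1
  have hX : HasDerivAt (fun s : ℝ => Real.cosh ((p:ℝ) * m * s) ^ ((1:ℝ)/p))
      (Real.sinh ((p:ℝ)*m*t) * ((p:ℝ)*m) * ((1:ℝ)/p) * Real.cosh ((p:ℝ)*m*t) ^ ((1:ℝ)/p - 1)) t :=
    hcosh.rpow_const (Or.inl hch.ne')
  have hXpos : (0:ℝ) < Real.cosh ((p:ℝ)*m*t) ^ ((1:ℝ)/p) := rpow_pos_of_pos hch _
  set c : ℝ := m ^ ((1 : ℝ) / p) * ((p : ℝ) + 1) ^ ((1 : ℝ) / (2 * p)) with hc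
  have hdiv := (hasDerivAt_const t c).div hX hXpos.ne'
  have heq : alph m p = fun s => c / Real.cosh ((p:ℝ) * m * s) ^ ((1:ℝ)/p) := by
    funext s; rfl
  rw [heq]
  refine hdiv.congr_deriv ?_
  symm
  have hsub : Real.cosh ((p:ℝ)*m*t) ^ ((1:ℝ)/p - 1)
      = Real.cosh ((p:ℝ)*m*t) ^ ((1:ℝ)/p) / Real.cosh ((p:ℝ)*m*t) := by
    rw [Real.rpow_sub hch, Real.rpow_one]
  rw [hsub]
  simp only []
  field_simp
  ring
noncomputable def Bf (m : ℝ) (p : ℕ) (t : ℝ) : ℝ :=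
  -m * Real.sinh (p * m * t) * alph m p t / Real.cosh (p * m * t)

noncomputable def Cf (m : ℝ) (p : ℕ) (t : ℝ) : ℝ :=
  m ^ 2 * alph m p t - alph m p t ^ (2 * p + 1)

lemma hasDerivAt_Bf {m : ℝ} (hm : 0 < m) {p : ℕ} (hp : 1 ≤ p) (t : ℝ) :
    HasDerivAt (Bf m p) (Cf m p t) t := by
  have hp0 : (p : ℝ) ≠ 0 := by
    have : 0 < p := hp
    positivity
  have hch : (0:ℝ) < Real.cosh ((p:ℝ) * m * t) := Real.cosh_pos _
  have h1 : HasDerivAt (fun s : ℝ => (p : ℝ) * m * s) ((p:ℝ) * m) t := by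
    simpa using (hasDerivAt_id t).const_mul ((p:ℝ) * m)
  have hsinh : HasDerivAt (fun s : ℝ => Real.sinh ((p:ℝ) * m * s))
      (Real.cosh ((p:ℝ) * m * t) * ((p:ℝ) * m)) t :=
    (Real.hasDerivAt_sinh _).comp t h1
  have hcosh : HasDerivAt (fun s : ℝ => Real.cosh ((p:ℝ) * m * s))
      (Real.sinh ((p:ℝ) * m * t) * ((p:ℝ) * m)) t :=
    (Real.hasDerivAt_cosh _).comp t h1
  have hnum : HasDerivAt (fun s : ℝ => -m * Real.sinh ((p:ℝ) * m * s) * alph m p s)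
      (-m * (Real.cosh ((p:ℝ)*m*t) * ((p:ℝ)*m)) * alph m p t
        + -m * Real.sinh ((p:ℝ)*m*t) * (-m * Real.sinh (p * m * t) * alph m p t / Real.cosh (p * m * t))) t := by
    exact ((hsinh.const_mul (-m)).mul (hasDerivAt_alph hm hp t))
  have hdiv := hnum.div hcosh hch.ne'
  have heq : Bf m p = fun s : ℝ => -m * Real.sinh ((p:ℝ) * m * s) * alph m p s / Real.cosh ((p:ℝ)*m*s) := by
    funext s; rfl
  rw [heq]
  refine hdiv.congr_deriv ?_
  symm
  have hs2 : Real.sinh ((p:ℝ)*m*t) ^ 2 = Real.cosh ((p:ℝ)*m*t) ^ 2 - 1 := Real.sinh_sq _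
  have hpow : alph m p t ^ (2*p+1) = (m ^ 2 * ((p : ℝ) + 1) / Real.cosh (p * m * t) ^ 2) * alph m p t := by
    rw [pow_succ, alph_pow hm hp t]
  unfold Cf
  rw [hpow]
  field_simp
  rw [show m * (p:ℝ) * t = (p:ℝ) * m * t by ring]
  linear_combination (-(alph m p t * ((p:ℝ)+1))) * hs2

lemma hasDerivAt_Cf {m : ℝ} (hm : 0 < m) {p : ℕ} (hp : 1 ≤ p) (t : ℝ) :
    HasDerivAt (Cf m p)
      (m ^ 2 * Bf m p t - (2 * (p:ℝ) + 1) * alph m p t ^ (2 * p) * Bf m p t) t := by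
  have hA := hasDerivAt_alph hm hp t
  have h2 : HasDerivAt (fun s => alph m p s ^ (2*p+1))
      ((2*(p:ℝ)+1) * alph m p t ^ (2*p) * Bf m p t) t := by
    have := hA.fun_pow (2*p+1)
    simpa [Bf, mul_comm, Nat.add_sub_cancel] using this
  have h1 : HasDerivAt (fun s => m ^ 2 * alph m p s) (m ^ 2 * Bf m p t) t := by
    simpa [Bf] using hA.const_mul (m^2)
  exact h1.sub h2
/-- The vector field of the first-order system. -/
noncomputable def vf (m : ℝ) (p : ℕ) (t : ℝ) (x : ℝ × ℝ) : ℝ × ℝ :=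
  (x.2, m ^ 2 * x.1 - (2 * (p:ℝ) + 1) * alph m p t ^ (2 * p) * x.1)

/-- A uniform Lipschitz/size constant. -/
noncomputable def Kl (m : ℝ) (p : ℕ) : ℝ :=
  max (m ^ 2 * (1 + ((p:ℝ) + 1) * (2 * (p:ℝ) + 1))) 1

lemma Kl_ge_one (m : ℝ) (p : ℕ) : 1 ≤ Kl m p := le_max_right _ _

lemma Kl_pos (m : ℝ) (p : ℕ) : 0 < Kl m p := lt_of_lt_of_le one_pos (Kl_ge_one m p)

lemma alph_pow_le {m : ℝ} (hm : 0 < m) {p : ℕ} (hp : 1 ≤ p) (t : ℝ) :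
    alph m p t ^ (2 * p) ≤ m ^ 2 * ((p : ℝ) + 1) := by
  rw [alph_pow hm hp t]
  have hch : (1:ℝ) ≤ Real.cosh ((p:ℝ) * m * t) := Real.one_le_cosh _
  have h2 : (1:ℝ) ≤ Real.cosh ((p:ℝ) * m * t) ^ 2 := by nlinarith
  exact div_le_self (by positivity) h2

lemma coeff_bound {m : ℝ} (hm : 0 < m) {p : ℕ} (hp : 1 ≤ p) (t : ℝ) :
    |m ^ 2 - (2 * (p:ℝ) + 1) * alph m p t ^ (2 * p)| ≤ Kl m p := by
  have hge : (0:ℝ) ≤ alph m p t ^ (2*p) := by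
    have := alph_pos hm p t
    positivity
  have hle := alph_pow_le hm hp t
  have key : |m ^ 2 - (2 * (p:ℝ) + 1) * alph m p t ^ (2 * p)|
      ≤ m ^ 2 * (1 + ((p:ℝ) + 1) * (2 * (p:ℝ) + 1)) := by
    rw [abs_le]
    constructor
    · nlinarith [sq_nonneg m]
    · nlinarith [sq_nonneg m]
  exact key.trans (le_max_left _ _)

lemma vf_lipschitz {m : ℝ} (hm : 0 < m) {p : ℕ} (hp : 1 ≤ p) (t : ℝ) :
    LipschitzWith ⟨Kl m p, (Kl_pos m p).le⟩ (vf m p t) := by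
  apply LipschitzWith.of_dist_le_mul
  intro x y
  have hb := coeff_bound hm hp t
  set Q : ℝ := m ^ 2 - (2 * (p:ℝ) + 1) * alph m p t ^ (2 * p) with hQ
  have h1 : vf m p t x = (x.2, Q * x.1) := by simp [vf, hQ]; ring
  have h2 : vf m p t y = (y.2, Q * y.1) := by simp [vf, hQ]; ring
  rw [h1, h2, Prod.dist_eq, Prod.dist_eq]
  simp only [Real.dist_eq]
  show max |x.2 - y.2| |Q * x.1 - Q * y.1| ≤ Kl m p * max |x.1 - y.1| |x.2 - y.2|
  have hK1 := Kl_ge_one m p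
  have hd1 : |x.1 - y.1| ≤ max |x.1 - y.1| |x.2 - y.2| := le_max_left _ _
  have hd2 : |x.2 - y.2| ≤ max |x.1 - y.1| |x.2 - y.2| := le_max_right _ _
  have hD0 : 0 ≤ max |x.1 - y.1| |x.2 - y.2| := le_trans (abs_nonneg _) hd1
  apply max_le
  · exact hd2.trans (le_mul_of_one_le_left hD0 hK1)
  · have he : Q * x.1 - Q * y.1 = Q * (x.1 - y.1) := by ring
    rw [he, abs_mul]
    calc |Q| * |x.1 - y.1| ≤ Kl m p * |x.1 - y.1| :=
          mul_le_mul_of_nonneg_right hb (abs_nonneg _)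
      _ ≤ Kl m p * max |x.1 - y.1| |x.2 - y.2| :=
          mul_le_mul_of_nonneg_left hd1 (Kl_pos m p).le

lemma vf_norm_le {m : ℝ} (hm : 0 < m) {p : ℕ} (hp : 1 ≤ p) (t : ℝ) (x : ℝ × ℝ) :
    ‖vf m p t x‖ ≤ Kl m p * ‖x‖ := by
  have hb := coeff_bound hm hp t
  set Q : ℝ := m ^ 2 - (2 * (p:ℝ) + 1) * alph m p t ^ (2 * p) with hQ
  have h1 : vf m p t x = (x.2, Q * x.1) := by simp [vf, hQ]; ring
  rw [h1, Prod.norm_def, Prod.norm_def]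
  simp only [Real.norm_eq_abs]
  show max |x.2| |Q * x.1| ≤ Kl m p * max |x.1| |x.2|
  have hK1 := Kl_ge_one m p
  have hd1 : |x.1| ≤ max |x.1| |x.2| := le_max_left _ _
  have hD0 : 0 ≤ max |x.1| |x.2| := le_trans (abs_nonneg _) hd1
  apply max_le
  · exact (le_max_right _ _).trans (le_mul_of_one_le_left hD0 hK1)
  · rw [abs_mul]
    calc |Q| * |x.1| ≤ Kl m p * |x.1| := mul_le_mul_of_nonneg_right hb (abs_nonneg _)
      _ ≤ Kl m p * max |x.1| |x.2| := mul_le_mul_of_nonneg_left hd1 (Kl_pos m p).le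

lemma continuous_alph {m : ℝ} (hm : 0 < m) {p : ℕ} (hp : 1 ≤ p) : Continuous (alph m p) :=
  Differentiable.continuous (fun t => (hasDerivAt_alph hm hp t).differentiableAt)

/-- Local solvability with a uniform time step. -/
lemma local_step {m : ℝ} (hm : 0 < m) {p : ℕ} (hp : 1 ≤ p) (t₀ : ℝ) (x₀ : ℝ × ℝ) :
    ∃ f : ℝ → ℝ × ℝ, f t₀ = x₀ ∧
      ∀ t ∈ Set.Icc (t₀ - 1 / (2 * Kl m p)) (t₀ + 1 / (2 * Kl m p)),
        HasDerivWithinAt f (vf m p t (f t))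
          (Set.Icc (t₀ - 1 / (2 * Kl m p)) (t₀ + 1 / (2 * Kl m p))) t := by
  have hKp := Kl_pos m p
  set ε : ℝ := 1 / (2 * Kl m p) with hε
  have hεpos : 0 < ε := by
    rw [hε]; exact div_pos one_pos (by linarith)
  have hpl : IsPicardLindelof (vf m p) (tmin := t₀ - ε) (tmax := t₀ + ε)
      ⟨t₀, by constructor <;> linarith⟩ x₀ ⟨‖x₀‖ + 1, by positivity⟩ 0
      ⟨Kl m p * (2 * ‖x₀‖ + 1), by positivity⟩ ⟨Kl m p, (Kl_pos m p).le⟩ := by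
    constructor
    · intro t _
      exact (vf_lipschitz hm hp t).lipschitzOnWith
    · intro x _
      apply Continuous.continuousOn
      have hg : Continuous (fun t : ℝ =>
          m ^ 2 * x.1 - (2 * (p:ℝ) + 1) * alph m p t ^ (2 * p) * x.1) :=
        continuous_const.sub
          (((continuous_const.mul ((continuous_alph hm hp).pow (2*p))).mul continuous_const))
      exact continuous_const.prodMk hg
    · intro t _ x hx
      calc ‖vf m p t x‖ ≤ Kl m p * ‖x‖ := vf_norm_le hm hp t x
        _ ≤ Kl m p * (2 * ‖x₀‖ + 1) := by
            apply mul_le_mul_of_nonneg_left _ (Kl_pos m p).le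
            have h1 : ‖x - x₀‖ ≤ ‖x₀‖ + 1 := mem_closedBall_iff_norm.mp hx
            calc ‖x‖ = ‖x₀ + (x - x₀)‖ := by ring_nf
              _ ≤ ‖x₀‖ + ‖x - x₀‖ := norm_add_le _ _
              _ ≤ 2 * ‖x₀‖ + 1 := by linarith
    · show Kl m p * (2 * ‖x₀‖ + 1) * max (t₀ + ε - t₀) (t₀ - (t₀ - ε)) ≤ ‖x₀‖ + 1 - 0
      have h0 : max (t₀ + ε - t₀) (t₀ - (t₀ - ε)) = ε := by
        simp
      rw [h0, hε]
      have hKne : Kl m p ≠ 0 := hKp.ne'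
      have heq2 : Kl m p * (2 * ‖x₀‖ + 1) * (1 / (2 * Kl m p)) = (2 * ‖x₀‖ + 1) / 2 := by
        field_simp
      rw [heq2]
      have hn : (0:ℝ) ≤ ‖x₀‖ := norm_nonneg _
      linarith
  exact hpl.exists_eq_forall_mem_Icc_hasDerivWithinAt₀
noncomputable def epsl (m : ℝ) (p : ℕ) : ℝ := 1 / (2 * Kl m p)

lemma epsl_pos (m : ℝ) (p : ℕ) : 0 < epsl m p :=
  div_pos one_pos (by have := Kl_pos m p; linarith)

/-- `f` solves the system on `[-n ε, n ε]` with initial value `x₀`. -/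
def Sol (m : ℝ) (p : ℕ) (x₀ : ℝ × ℝ) (n : ℕ) (f : ℝ → ℝ × ℝ) : Prop :=
  f 0 = x₀ ∧ ∀ t ∈ Set.Icc (-((n:ℝ) * epsl m p)) ((n:ℝ) * epsl m p),
    HasDerivWithinAt f (vf m p t (f t))
      (Set.Icc (-((n:ℝ) * epsl m p)) ((n:ℝ) * epsl m p)) t

lemma sol_base {m : ℝ} (hm : 0 < m) {p : ℕ} (hp : 1 ≤ p) (x₀ : ℝ × ℝ) :
    ∃ f, Sol m p x₀ 1 f := by
  obtain ⟨f, hf0, hf⟩ := local_step hm hp 0 x₀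
  refine ⟨f, hf0, ?_⟩
  have he : -((1:ℕ) * epsl m p : ℝ) = 0 - 1 / (2 * Kl m p) := by
    simp [epsl]
  have he2 : ((1:ℕ) * epsl m p : ℝ) = 0 + 1 / (2 * Kl m p) := by
    simp [epsl]
  rw [he, he2]
  exact hf

lemma sol_step {m : ℝ} (hm : 0 < m) {p : ℕ} (hp : 1 ≤ p) (x₀ : ℝ × ℝ) (n : ℕ)
    (f : ℝ → ℝ × ℝ) (hf : Sol m p x₀ n f) :
    ∃ g, Sol m p x₀ (n + 1) g ∧
      ∀ t ∈ Set.Icc (-((n:ℝ) * epsl m p)) ((n:ℝ) * epsl m p), g t = f t := by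
  set ε : ℝ := epsl m p with hε
  have hεpos : 0 < ε := epsl_pos m p
  set a : ℝ := (n:ℝ) * ε with ha
  have ha0 : 0 ≤ a := by positivity
  obtain ⟨hf0, hfd⟩ := hf
  -- local solutions to the right and to the left
  obtain ⟨fp, hfp0, hfpd⟩ := local_step hm hp a (f a)
  obtain ⟨fm, hfm0, hfmd⟩ := local_step hm hp (-a) (f (-a))
  have hεK : (1 : ℝ) / (2 * Kl m p) = ε := rfl
  rw [hεK] at hfpd hfmd
  set g : ℝ → ℝ × ℝ := fun t => if t < -a then fm t else if t ≤ a then f t else fp t with hg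
  have hg_eq_f : ∀ t ∈ Set.Icc (-a) a, g t = f t := by
    intro t ht
    have h1 : ¬ t < -a := not_lt.mpr ht.1
    have h2 : t ≤ a := ht.2
    simp [hg, h1, h2]
  have hg_eq_fp : ∀ t ∈ Set.Icc a (a + ε), g t = fp t := by
    intro t ht
    rcases eq_or_lt_of_le ht.1 with h | h
    · rw [hg_eq_f t ⟨by linarith, h.symm.le⟩, ← h, hfp0]
    · have h1 : ¬ t < -a := by push_neg; linarith
      have h2 : ¬ t ≤ a := not_le.mpr h
      simp [hg, h1, h2]
  have hg_eq_fm : ∀ t ∈ Set.Icc (-a - ε) (-a), g t = fm t := by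
    intro t ht
    rcases eq_or_lt_of_le ht.2 with h | h
    · rw [hg_eq_f t ⟨h.ge, by linarith [h.le]⟩, h, hfm0]
    · have h1 : t < -a := h
      simp [hg, h1]
  have hcast : ((n + 1 : ℕ) : ℝ) * ε = a + ε := by push_cast; ring
  refine ⟨g, ⟨?_, ?_⟩, hg_eq_f⟩
  · rw [hg_eq_f 0 ⟨by linarith, ha0⟩, hf0]
  · intro t ht
    rw [hcast] at ht ⊢
    -- three pieces
    have hS2 : HasDerivWithinAt g (vf m p t (g t)) (Set.Icc (-a) a) t := by
      by_cases hmem : t ∈ Set.Icc (-a) a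
      · have := (hfd t hmem).congr hg_eq_f (hg_eq_f t hmem)
        rwa [hg_eq_f t hmem]
      · have : t ∉ closure (Set.Icc (-a) a) := by
          rwa [closure_Icc]
        exact HasFDerivWithinAt.of_notMem_closure this
    have hS3 : HasDerivWithinAt g (vf m p t (g t)) (Set.Icc a (a + ε)) t := by
      by_cases hmem : t ∈ Set.Icc a (a + ε)
      · have hsub : Set.Icc a (a + ε) ⊆ Set.Icc (a - ε) (a + ε) :=
          Set.Icc_subset_Icc (by linarith) le_rfl
        have h1 := (hfpd t (hsub hmem)).mono hsub
        have h2 := h1.congr hg_eq_fp (hg_eq_fp t hmem)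
        rwa [hg_eq_fp t hmem]
      · have : t ∉ closure (Set.Icc a (a + ε)) := by rwa [closure_Icc]
        exact HasFDerivWithinAt.of_notMem_closure this
    have hS1 : HasDerivWithinAt g (vf m p t (g t)) (Set.Icc (-a - ε) (-a)) t := by
      by_cases hmem : t ∈ Set.Icc (-a - ε) (-a)
      · have hsub : Set.Icc (-a - ε) (-a) ⊆ Set.Icc (-a - ε) (-a + ε) :=
          Set.Icc_subset_Icc le_rfl (by linarith)
        have h1 := (hfmd t (hsub hmem)).mono hsub
        have h2 := h1.congr hg_eq_fm (hg_eq_fm t hmem)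
        rwa [hg_eq_fm t hmem]
      · have : t ∉ closure (Set.Icc (-a - ε) (-a)) := by rwa [closure_Icc]
        exact HasFDerivWithinAt.of_notMem_closure this
    have hunion := (hS1.union hS2).union hS3
    apply hunion.mono
    intro s hs
    rcases le_or_gt s (-a) with h | h
    · exact Or.inl (Or.inl ⟨by linarith [hs.1], h⟩)
    · rcases le_or_gt s a with h2 | h2
      · exact Or.inl (Or.inr ⟨h.le, h2⟩)
      · exact Or.inr ⟨h2.le, hs.2⟩

/-- Global existence for the linear system. -/
lemma global_sol {m : ℝ} (hm : 0 < m) {p : ℕ} (hp : 1 ≤ p) (x₀ : ℝ × ℝ) :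
    ∃ f : ℝ → ℝ × ℝ, f 0 = x₀ ∧ ∀ t : ℝ, HasDerivAt f (vf m p t (f t)) t := by
  set ε : ℝ := epsl m p with hε
  have hεpos : 0 < ε := epsl_pos m p
  obtain ⟨f₀, hf₀⟩ := sol_base hm hp x₀
  choose step hstep hagree using fun (n : ℕ) (f : ℝ → ℝ × ℝ) (hf : Sol m p x₀ n f) =>
    sol_step hm hp x₀ n f hf
  let G : (n : ℕ) → {f : ℝ → ℝ × ℝ // Sol m p x₀ (n + 1) f} := fun n =>
    Nat.rec ⟨f₀, hf₀⟩ (fun k ih => ⟨step (k + 1) ih.1 ih.2, hstep (k + 1) ih.1 ih.2⟩) n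
  -- restated solution property with real casts
  have hGd : ∀ (n : ℕ) (t : ℝ), t ∈ Set.Icc (-(((n:ℝ) + 1) * ε)) (((n:ℝ) + 1) * ε) →
      HasDerivWithinAt (G n).1 (vf m p t ((G n).1 t))
        (Set.Icc (-(((n:ℝ) + 1) * ε)) (((n:ℝ) + 1) * ε)) t := by
    intro n t ht
    have h := (G n).2.2 t
    have hc : (((n + 1 : ℕ)):ℝ) = (n:ℝ) + 1 := by push_cast; ring
    rw [hc] at h
    exact h ht
  -- agreement between consecutive levels, then general monotone agreement
  have hag1 : ∀ (n : ℕ) (t : ℝ), t ∈ Set.Icc (-(((n:ℝ) + 1) * ε)) (((n:ℝ) + 1) * ε) →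
      (G (n + 1)).1 t = (G n).1 t := by
    intro n t ht
    have h := hagree (n + 1) (G n).1 (G n).2 t
    have hc : (((n + 1 : ℕ)):ℝ) = (n:ℝ) + 1 := by push_cast; ring
    rw [hc] at h
    exact h ht
  have key : ∀ (a k : ℕ) (t : ℝ), t ∈ Set.Icc (-(((a:ℝ) + 1) * ε)) (((a:ℝ) + 1) * ε) →
      (G (a + k)).1 t = (G a).1 t := by
    intro a k
    induction k with
    | zero => intro t ht; rfl
    | succ k ih =>
      intro t ht
      have hsub : t ∈ Set.Icc (-((((a + k : ℕ):ℝ) + 1) * ε)) ((((a + k : ℕ):ℝ) + 1) * ε) := by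
        have hle : ((a:ℝ) + 1) * ε ≤ (((a + k : ℕ):ℝ) + 1) * ε := by
          apply mul_le_mul_of_nonneg_right _ hεpos.le
          push_cast; linarith [Nat.cast_nonneg (α := ℝ) k]
        exact ⟨by linarith [ht.1], by linarith [ht.2]⟩
      have h0 : a + (k + 1) = (a + k) + 1 := by ring
      rw [h0, hag1 (a + k) t hsub, ih t ht]
  have key2 : ∀ (a b : ℕ), a ≤ b → ∀ (t : ℝ),
      t ∈ Set.Icc (-(((a:ℝ) + 1) * ε)) (((a:ℝ) + 1) * ε) → (G b).1 t = (G a).1 t := by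
    intro a b hab t ht
    obtain ⟨k, hk⟩ := Nat.exists_eq_add_of_le hab
    rw [hk]
    exact key a k t ht
  -- index large enough for t
  set N : ℝ → ℕ := fun t => ⌈|t| / ε⌉₊ with hN
  have hNs : ∀ s : ℝ, |s| ≤ ((N s : ℝ) + 1) * ε ∧ |s| < ((N s : ℝ) + 1) * ε := by
    intro s
    have h2 : |s| / ε ≤ (⌈|s| / ε⌉₊ : ℝ) := Nat.le_ceil _
    have h3 : |s| ≤ (N s : ℝ) * ε := by
      rw [hN, ← div_le_iff₀ hεpos]
      exact h2
    have h4 : (N s : ℝ) * ε < ((N s : ℝ) + 1) * ε := by nlinarith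
    exact ⟨by linarith, by linarith⟩
  set F : ℝ → ℝ × ℝ := fun t => (G (N t)).1 t with hF
  have hFs : ∀ (n : ℕ) (s : ℝ), |s| ≤ ((n:ℝ) + 1) * ε → F s = (G n).1 s := by
    intro n s hs
    have hsN := (hNs s).1
    have hmemN : s ∈ Set.Icc (-(((N s : ℝ) + 1) * ε)) (((N s : ℝ) + 1) * ε) := abs_le.mp hsN
    have hmemn : s ∈ Set.Icc (-(((n:ℝ) + 1) * ε)) (((n:ℝ) + 1) * ε) := abs_le.mp hs
    rcases le_total (N s) n with h | h
    · rw [hF]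
      have e1 := key2 (N s) n h s hmemN
      exact e1.symm ▸ rfl
    · exact key2 n (N s) h s hmemn
  refine ⟨F, ?_, ?_⟩
  · have h0 : |(0:ℝ)| ≤ (((0:ℕ):ℝ) + 1) * ε := by
      rw [abs_zero]
      push_cast
      linarith
    rw [hFs 0 0 h0]
    exact (G 0).2.1
  · intro t
    set n : ℕ := N t with hn
    have htlt := (hNs t).2
    have hUopen : IsOpen (Set.Ioo (-(((n:ℝ) + 1) * ε)) (((n:ℝ) + 1) * ε)) := isOpen_Ioo
    have htU : t ∈ Set.Ioo (-(((n:ℝ) + 1) * ε)) (((n:ℝ) + 1) * ε) := abs_lt.mp htlt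
    have hFG : ∀ s ∈ Set.Ioo (-(((n:ℝ) + 1) * ε)) (((n:ℝ) + 1) * ε), F s = (G n).1 s := by
      intro s hs
      apply hFs
      have := abs_lt.mpr ⟨hs.1, hs.2⟩
      linarith
    have hGdt : HasDerivAt (G n).1 (vf m p t ((G n).1 t)) t := by
      have h1 := hGd n t (Set.Ioo_subset_Icc_self htU)
      exact h1.hasDerivAt (Icc_mem_nhds htU.1 htU.2)
    have hev : F =ᶠ[nhds t] (G n).1 :=
      Filter.eventuallyEq_of_mem (hUopen.mem_nhds htU) hFG
    have := hGdt.congr_of_eventuallyEq hev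
    rwa [← hFG t htU] at this
lemma hasDerivAt_fst' {F : ℝ → ℝ × ℝ} {d : ℝ × ℝ} {t : ℝ} (h : HasDerivAt F d t) :
    HasDerivAt (fun s => (F s).1) d.1 t := by
  have := (ContinuousLinearMap.fst ℝ ℝ ℝ).hasFDerivAt.comp_hasDerivAt t h
  exact this

lemma hasDerivAt_snd' {F : ℝ → ℝ × ℝ} {d : ℝ × ℝ} {t : ℝ} (h : HasDerivAt F d t) :
    HasDerivAt (fun s => (F s).2) d.2 t := by
  have := (ContinuousLinearMap.snd ℝ ℝ ℝ).hasFDerivAt.comp_hasDerivAt t h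
  exact this

lemma energy_est (mm V a b : ℝ) (hmm : 0 < mm) (hV0 : 0 ≤ V) (hV : V ≤ 4 * mm ^ 2) :
    2 * b * (mm ^ 2 * a - V * a) + mm ^ 2 * (2 * a * b) ≤ 2 * mm * (b ^ 2 + mm ^ 2 * a ^ 2) := by
  nlinarith [mul_nonneg (sub_nonneg.mpr hV) (sq_nonneg (mm * a - b)),
    mul_nonneg hV0 (sq_nonneg (mm * a + b)), hmm]

lemma decay_est (x y e mm : ℝ) (he : 0 < e) (hy : 0 ≤ y) (h : x ≤ 2 * mm * y) :
    x * e + y * (e * -(2 * mm)) ≤ 0 := by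
  nlinarith [mul_le_mul_of_nonneg_right h he.le]

set_option maxHeartbeats 1600000 in
theorem stmt_13 (m : ℝ) (hm : 0 < m) (p : ℕ) (hp : 1 ≤ p) :
    ∃ γ : ℝ → ℝ, ∃ C > 0,
      (∀ t : ℝ, HasDerivAt γ (deriv γ t) t) ∧
      (∀ t : ℝ, HasDerivAt (deriv γ)
          (m ^ 2 * γ t - (2 * p + 1) * (alph m p t) ^ (2 * p) * γ t) t) ∧
      (∀ t : ℝ, 0 ≤ t → |γ t| ≤ C * Real.exp (m * t) ∧ |deriv γ t| ≤ C * Real.exp (m * t)) ∧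
      ∃ W : ℝ, W ≠ 0 ∧
        ∀ t : ℝ, deriv (alph m p) t * deriv γ t - γ t * deriv (deriv (alph m p)) t = W := by
  obtain ⟨F, hF0, hFd⟩ := global_sol hm hp ((1 : ℝ), (0 : ℝ))
  set γ : ℝ → ℝ := fun t => (F t).1 with hγ
  set δ : ℝ → ℝ := fun t => (F t).2 with hδ
  have hd1 : ∀ t, HasDerivAt γ (δ t) t := by
    intro t
    have := hasDerivAt_fst' (hFd t)
    simpa [vf] using this
  have hd2 : ∀ t, HasDerivAt δ
      (m ^ 2 * γ t - (2 * (p:ℝ) + 1) * alph m p t ^ (2 * p) * γ t) t := by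
    intro t
    have := hasDerivAt_snd' (hFd t)
    simpa [vf] using this
  have hderiv : deriv γ = δ := funext fun t => (hd1 t).deriv
  have hγ0 : γ 0 = 1 := by simp [hγ, hF0]
  have hδ0 : δ 0 = 0 := by simp [hδ, hF0]
  -- the Wronskian
  have hdalph : deriv (alph m p) = Bf m p := funext fun t => (hasDerivAt_alph hm hp t).deriv
  have hddalph : deriv (deriv (alph m p)) = Cf m p := by
    rw [hdalph]; exact funext fun t => (hasDerivAt_Bf hm hp t).deriv
  set w : ℝ → ℝ := fun t => Bf m p t * δ t - γ t * Cf m p t with hw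
  have hwd : ∀ t, HasDerivAt w 0 t := by
    intro t
    have h1 := (hasDerivAt_Bf hm hp t).mul (hd2 t)
    have h2 := (hd1 t).mul (hasDerivAt_Cf hm hp t)
    have h3 := h1.sub h2
    refine h3.congr_deriv ?_
    symm
    ring
  have hwconst : ∀ t, w t = w 0 :=
    fun t => is_const_of_deriv_eq_zero (fun s => (hwd s).differentiableAt)
      (fun s => (hwd s).deriv) t 0
  have hBf0 : Bf m p 0 = 0 := by simp [Bf]
  have hCf0 : Cf m p 0 = -((p:ℝ) * m ^ 2 * alph m p 0) := by
    have h1 : alph m p 0 ^ (2 * p + 1) = m ^ 2 * ((p:ℝ) + 1) * alph m p 0 := by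
      rw [pow_succ, alph_pow hm hp 0]
      simp
    rw [Cf, h1]
    ring
  have hw0 : w 0 = (p:ℝ) * m ^ 2 * alph m p 0 := by
    rw [hw]
    simp only [hBf0, hδ0, hγ0, hCf0]
    ring
  have hWpos : 0 < (p:ℝ) * m ^ 2 * alph m p 0 := by
    have h1 : (0:ℝ) < p := by exact_mod_cast hp
    have h2 := alph_pos hm p 0
    positivity
  -- growth bounds
  obtain ⟨C, hCpos, hbound⟩ : ∃ C > 0, ∀ t : ℝ, 0 ≤ t →
      |γ t| ≤ C * Real.exp (m * t) ∧ |δ t| ≤ C * Real.exp (m * t) := by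
    set T : ℝ := Real.log (((p:ℝ) + 1) * (2 * (p:ℝ) + 1)) / (2 * m) with hT
    have hp1 : (1:ℝ) ≤ (p:ℝ) := by exact_mod_cast hp
    have harg1 : (1:ℝ) ≤ ((p:ℝ) + 1) * (2 * (p:ℝ) + 1) := by nlinarith
    have hT0 : 0 ≤ T := div_nonneg (Real.log_nonneg harg1) (by linarith)
    set E : ℝ → ℝ := fun t => δ t ^ 2 + m ^ 2 * γ t ^ 2 with hE
    have hE0 : ∀ t, 0 ≤ E t := fun t => by rw [hE]; positivity
    set ED : ℝ → ℝ := fun t =>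
      2 * δ t * (m ^ 2 * γ t - (2 * (p:ℝ) + 1) * alph m p t ^ (2 * p) * γ t)
        + m ^ 2 * (2 * γ t * δ t) with hED
    have hEd : ∀ t, HasDerivAt E (ED t) t := by
      intro t
      have h1 := (hd2 t).pow 2
      have h2 := ((hd1 t).pow 2).const_mul (m ^ 2)
      have h3 := h1.add h2
      refine h3.congr_deriv ?_
      symm
      rw [hED]
      push_cast
      ring
    -- potential bound for t ≥ T
    have hVle : ∀ t, T ≤ t → (2 * (p:ℝ) + 1) * alph m p t ^ (2 * p) ≤ 4 * m ^ 2 := by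
      intro t ht
      have htpos : 0 ≤ t := le_trans hT0 ht
      rw [alph_pow hm hp t]
      have hch : Real.exp ((p:ℝ) * m * t) / 2 ≤ Real.cosh ((p:ℝ) * m * t) := by
        rw [Real.cosh_eq]
        have := (Real.exp_pos (-((p:ℝ) * m * t))).le
        linarith
      have hch2 : Real.exp ((p:ℝ) * m * t) ^ 2 / 4 ≤ Real.cosh ((p:ℝ) * m * t) ^ 2 := by
        have h0 : 0 ≤ Real.exp ((p:ℝ) * m * t) / 2 := by positivity
        nlinarith
      have h2mT : 2 * m * T = Real.log (((p:ℝ) + 1) * (2 * (p:ℝ) + 1)) := by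
        rw [hT]; field_simp
      have hexp : ((p:ℝ) + 1) * (2 * (p:ℝ) + 1) ≤ Real.exp ((p:ℝ) * m * t) ^ 2 := by
        have e1 : ((p:ℝ) + 1) * (2 * (p:ℝ) + 1) = Real.exp (2 * m * T) := by
          rw [h2mT, Real.exp_log (by nlinarith)]
        have e2 : Real.exp ((p:ℝ) * m * t) ^ 2 = Real.exp (2 * ((p:ℝ) * m * t)) := by
          rw [sq, ← Real.exp_add]; ring_nf
        rw [e1, e2]
        apply Real.exp_le_exp.mpr
        nlinarith [mul_nonneg hm.le (sub_nonneg.mpr ht),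
          mul_nonneg (mul_nonneg hm.le htpos) (sub_nonneg.mpr hp1)]
      have hcosh2pos : (0:ℝ) < Real.cosh ((p:ℝ) * m * t) ^ 2 := by
        have := Real.cosh_pos ((p:ℝ) * m * t)
        positivity
      rw [mul_div_assoc']
      rw [div_le_iff₀ hcosh2pos]
      nlinarith [sq_nonneg m, Real.exp_pos ((p:ℝ)*m*t)]
    -- exponential-weighted energy is decreasing on [T, ∞)
    have hexpd : ∀ t : ℝ, HasDerivAt (fun s : ℝ => Real.exp (-(2 * m) * s))
        (Real.exp (-(2 * m) * t) * (-(2 * m))) t := by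
      intro t
      have h1 : HasDerivAt (fun s : ℝ => -(2 * m) * s) (-(2 * m)) t := by
        simpa using (hasDerivAt_id t).const_mul (-(2 * m))
      exact h1.exp
    set Φ : ℝ → ℝ := fun t => E t * Real.exp (-(2 * m) * t) with hΦ
    have hΦd : ∀ t, HasDerivAt Φ
        (ED t * Real.exp (-(2 * m) * t) + E t * (Real.exp (-(2 * m) * t) * (-(2 * m)))) t :=
      fun t => (hEd t).mul (hexpd t)
    have hmono : AntitoneOn Φ (Set.Ici T) := by
      apply antitoneOn_of_deriv_nonpos (convex_Ici T)
      · exact fun t _ => ((hΦd t).continuousAt).continuousWithinAt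
      · intro t _
        exact ((hΦd t).differentiableAt).differentiableWithinAt
      · intro t ht
        rw [interior_Ici, Set.mem_Ioi] at ht
        rw [(hΦd t).deriv]
        have hV := hVle t ht.le
        have hV0 : 0 ≤ (2 * (p:ℝ) + 1) * alph m p t ^ (2 * p) := by
          have := (alph_pos hm p t).le
          positivity
        have hEDle : ED t ≤ 2 * m * E t :=
          energy_est m ((2 * (p:ℝ) + 1) * alph m p t ^ (2 * p)) (γ t) (δ t) hm hV0 hV
        exact decay_est (ED t) (E t) _ m (Real.exp_pos _) (hE0 t) hEDle
    -- consequences for t ≥ T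
    set c1 : ℝ := Real.sqrt (E T * Real.exp (-(2 * m) * T)) with hc1
    have hc10 : 0 ≤ c1 := Real.sqrt_nonneg _
    have hEle : ∀ t, T ≤ t → E t ≤ (c1 * Real.exp (m * t)) ^ 2 := by
      intro t ht
      have h1 : Φ t ≤ Φ T := hmono (Set.self_mem_Ici) ht ht
      have h2 : c1 ^ 2 = E T * Real.exp (-(2 * m) * T) := by
        rw [hc1, Real.sq_sqrt]
        positivity
      have h3 : (c1 * Real.exp (m * t)) ^ 2 = c1 ^ 2 * Real.exp (m * t) ^ 2 := by ring
      have h4 : Real.exp (m * t) ^ 2 * Real.exp (-(2 * m) * t) = 1 := by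
        have harg : m * t + m * t + -(2 * m) * t = 0 := by ring
        rw [sq, ← Real.exp_add, ← Real.exp_add, harg, Real.exp_zero]
      have h1' : E t * Real.exp (-(2 * m) * t) ≤ E T * Real.exp (-(2 * m) * T) := h1
      have h6 : E t * Real.exp (-(2 * m) * t) * Real.exp (m * t) ^ 2
          ≤ E T * Real.exp (-(2 * m) * T) * Real.exp (m * t) ^ 2 :=
        mul_le_mul_of_nonneg_right h1' (by positivity)
      have h7 : E t * Real.exp (-(2 * m) * t) * Real.exp (m * t) ^ 2 = E t := by
        calc E t * Real.exp (-(2 * m) * t) * Real.exp (m * t) ^ 2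
            = E t * (Real.exp (m * t) ^ 2 * Real.exp (-(2 * m) * t)) := by ring
          _ = E t * 1 := by rw [h4]
          _ = E t := mul_one _
      rw [h3, h2]
      rw [h7] at h6
      linarith
    have hsq : ∀ t, T ≤ t → |δ t| ≤ c1 * Real.exp (m * t) ∧
        m * |γ t| ≤ c1 * Real.exp (m * t) := by
      intro t ht
      have h1 := hEle t ht
      have hc1e : 0 ≤ c1 * Real.exp (m * t) := by positivity
      have hEt : E t = δ t ^ 2 + m ^ 2 * γ t ^ 2 := rfl
      constructor
      · have : δ t ^ 2 ≤ (c1 * Real.exp (m * t)) ^ 2 := by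
          have hmg : 0 ≤ m ^ 2 * γ t ^ 2 := by positivity
          linarith
        calc |δ t| = Real.sqrt (δ t ^ 2) := (Real.sqrt_sq_eq_abs _).symm
          _ ≤ Real.sqrt ((c1 * Real.exp (m * t)) ^ 2) := Real.sqrt_le_sqrt this
          _ = c1 * Real.exp (m * t) := Real.sqrt_sq hc1e
      · have h6 : (m * γ t) ^ 2 ≤ (c1 * Real.exp (m * t)) ^ 2 := by
          have hmg : (m * γ t) ^ 2 = m ^ 2 * γ t ^ 2 := by ring
          linarith [sq_nonneg (δ t)]
        calc m * |γ t| = |m * γ t| := by rw [abs_mul, abs_of_pos hm]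
          _ = Real.sqrt ((m * γ t) ^ 2) := (Real.sqrt_sq_eq_abs _).symm
          _ ≤ Real.sqrt ((c1 * Real.exp (m * t)) ^ 2) := Real.sqrt_le_sqrt h6
          _ = c1 * Real.exp (m * t) := Real.sqrt_sq hc1e
    -- compact bound on [0, T]
    have hγcont : ContinuousOn γ (Set.Icc 0 T) :=
      (Differentiable.continuous fun t => (hd1 t).differentiableAt).continuousOn
    have hδcont : ContinuousOn δ (Set.Icc 0 T) :=
      (Differentiable.continuous fun t => (hd2 t).differentiableAt).continuousOn
    obtain ⟨M1, hM1⟩ := (isCompact_Icc : IsCompact (Set.Icc (0:ℝ) T)).exists_bound_of_continuousOn hγcont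
    obtain ⟨M2, hM2⟩ := (isCompact_Icc : IsCompact (Set.Icc (0:ℝ) T)).exists_bound_of_continuousOn hδcont
    have hM10 : 0 ≤ M1 := le_trans (norm_nonneg _) (hM1 0 ⟨le_refl 0, hT0⟩)
    have hM20 : 0 ≤ M2 := le_trans (norm_nonneg _) (hM2 0 ⟨le_refl 0, hT0⟩)
    refine ⟨M1 + M2 + c1 + c1 / m + 1, by positivity, ?_⟩
    intro t ht
    set CC : ℝ := M1 + M2 + c1 + c1 / m + 1 with hCC
    have hCC0 : 0 < CC := by rw [hCC]; positivity
    have hexp1 : 1 ≤ Real.exp (m * t) := Real.one_le_exp (by positivity)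
    rcases le_total t T with hcase | hcase
    · constructor
      · calc |γ t| ≤ M1 := hM1 t ⟨ht, hcase⟩
          _ ≤ CC := by rw [hCC]; have := div_nonneg hc10 hm.le; linarith
          _ = CC * 1 := by ring
          _ ≤ CC * Real.exp (m * t) := by
              apply mul_le_mul_of_nonneg_left hexp1 hCC0.le
      · calc |δ t| ≤ M2 := hM2 t ⟨ht, hcase⟩
          _ ≤ CC := by rw [hCC]; have := div_nonneg hc10 hm.le; linarith
          _ = CC * 1 := by ring
          _ ≤ CC * Real.exp (m * t) := by
              apply mul_le_mul_of_nonneg_left hexp1 hCC0.le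
    · obtain ⟨hδb, hγb⟩ := hsq t hcase
      constructor
      · have h7 : |γ t| ≤ c1 / m * Real.exp (m * t) := by
          rw [div_mul_eq_mul_div, le_div_iff₀ hm]
          linarith [hγb]
        calc |γ t| ≤ c1 / m * Real.exp (m * t) := h7
          _ ≤ CC * Real.exp (m * t) := by
              apply mul_le_mul_of_nonneg_right _ (Real.exp_pos _).le
              rw [hCC]; linarith
      · calc |δ t| ≤ c1 * Real.exp (m * t) := hδb
          _ ≤ CC * Real.exp (m * t) := by
            apply mul_le_mul_of_nonneg_right _ (Real.exp_pos _).le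
            rw [hCC]; have := div_nonneg hc10 hm.le; linarith
  refine ⟨γ, C, hCpos, ?_, ?_, ?_, ⟨(p:ℝ) * m ^ 2 * alph m p 0, hWpos.ne', ?_⟩⟩
  · intro t; rw [hderiv]; exact hd1 t
  · intro t; rw [hderiv]
    exact hd2 t
  · intro t ht
    rw [hderiv]
    exact hbound t ht
  · intro t
    rw [hddalph, hdalph, hderiv, ← hw0]
    exact hwconst t
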